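/- With U, f, k, ε, K as above and θ_u the spline cubature weights, for every g ∈ Q(U,f,k,ε,K): ∑_{u∈U} g(u) θ_u = (a+b)/2, where [a,b] = {∑_{v∈V} h(v) : h ∈ Q(U,f,k,ε,K)} is the interval of integrals of functions in Q(U,f,k,ε,K). -/

import Mathlib

open Matrix

/-- The ℓ²-norm of a function on the vertices of a finite graph. -/
noncomputable def gnorm {V : Type*} [Fintype V] (f : V → ℝ) : ℝ :=
  Real.sqrt (∑ v, f v ^ 2)

/-- The operator `εI + L` used in the definition of variational splines. -/
noncomputable def splineOp {V : Type*} [Fintype V] [DecidableEq V]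
    (G : SimpleGraph V) [DecidableRel G.Adj] (ε : ℝ) : Matrix V V ℝ :=
  ε • (1 : Matrix V V ℝ) + G.lapMatrix ℝ


namespace Stmt14Aux
set_option linter.unusedSectionVars false
variable {V : Type*} [Fintype V] [DecidableEq V]

lemma dp_self_nonneg (f : V → ℝ) : 0 ≤ f ⬝ᵥ f :=
  Finset.sum_nonneg fun v _ => mul_self_nonneg _

lemma gnorm_eq (f : V → ℝ) : gnorm f = Real.sqrt (f ⬝ᵥ f) := by
  simp [gnorm, dotProduct, sq]

lemma gnorm_sq (f : V → ℝ) : gnorm f ^ 2 = f ⬝ᵥ f := by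
  rw [gnorm_eq, Real.sq_sqrt (dp_self_nonneg f)]

lemma gnorm_le_iff (a b : V → ℝ) : gnorm a ≤ gnorm b ↔ a ⬝ᵥ a ≤ b ⬝ᵥ b := by
  rw [gnorm_eq, gnorm_eq]
  constructor
  · intro h
    have h2 := mul_self_le_mul_self (Real.sqrt_nonneg _) h
    rwa [Real.mul_self_sqrt (dp_self_nonneg a), Real.mul_self_sqrt (dp_self_nonneg b)] at h2
  · intro h; exact Real.sqrt_le_sqrt h

lemma expand_dp (x w : V → ℝ) (t : ℝ) :
    (x + t • w) ⬝ᵥ (x + t • w) = x ⬝ᵥ x + 2 * t * (x ⬝ᵥ w) + t ^ 2 * (w ⬝ᵥ w) := by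
  simp [add_dotProduct, dotProduct_add, smul_dotProduct, dotProduct_smul,
    dotProduct_comm w x]
  ring

lemma ortho_of_min (x w : V → ℝ)
    (h : ∀ t : ℝ, x ⬝ᵥ x ≤ (x + t • w) ⬝ᵥ (x + t • w)) : x ⬝ᵥ w = 0 := by
  by_contra hc
  set c := x ⬝ᵥ w with hcdef
  set d := w ⬝ᵥ w with hddef
  have hd : 0 ≤ d := dp_self_nonneg w
  have ht := h (-c / (d + 1))
  rw [expand_dp] at ht
  have hd1 : (0:ℝ) < d + 1 := by linarith
  have hc2 : 0 < c ^ 2 := by positivity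
  set t := -c / (d + 1) with htdef
  have key : 0 ≤ 2 * t * c + t ^ 2 * d := by simp only [hcdef, hddef, htdef] at ht ⊢; linarith
  have htd : t * (d + 1) = -c := div_mul_cancel₀ _ (ne_of_gt hd1)
  have k2 : 0 ≤ (2 * t * c + t ^ 2 * d) * (d + 1) ^ 2 :=
    mul_nonneg key (sq_nonneg _)
  have e : (2 * t * c + t ^ 2 * d) * (d + 1) ^ 2
      = 2 * c * (t * (d + 1)) * (d + 1) + d * (t * (d + 1)) ^ 2 := by ring
  rw [e, htd] at k2
  nlinarith [k2, hc2, hd]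



lemma splineOp_mulVec (G : SimpleGraph V) [DecidableRel G.Adj] (ε : ℝ) (x : V → ℝ) :
    (splineOp G ε) *ᵥ x = ε • x + (G.lapMatrix ℝ) *ᵥ x := by
  simp [splineOp, add_mulVec, smul_mulVec]

lemma gnorm_lower (G : SimpleGraph V) [DecidableRel G.Adj] {ε : ℝ} (hε : 0 < ε) (x : V → ℝ) :
    ε * gnorm x ≤ gnorm ((splineOp G ε) *ᵥ x) := by
  set a := (splineOp G ε) *ᵥ x with ha
  have hax : ε * (x ⬝ᵥ x) ≤ a ⬝ᵥ x := by
    have hpsd := (SimpleGraph.posSemidef_lapMatrix ℝ G).dotProduct_mulVec_nonneg x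
    rw [star_trivial] at hpsd
    rw [ha, splineOp_mulVec, add_dotProduct, smul_dotProduct]
    have : ((G.lapMatrix ℝ) *ᵥ x) ⬝ᵥ x = x ⬝ᵥ ((G.lapMatrix ℝ) *ᵥ x) := dotProduct_comm _ _
    rw [this]
    simp only [smul_eq_mul]
    linarith
  by_cases hx : x ⬝ᵥ x = 0
  · have : gnorm x = 0 := by rw [gnorm_eq, hx, Real.sqrt_zero]
    rw [this, mul_zero]; rw [gnorm_eq]; exact Real.sqrt_nonneg _
  · have hxpos : 0 < x ⬝ᵥ x := lt_of_le_of_ne (dp_self_nonneg x) (Ne.symm hx)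
    -- Cauchy-Schwarz : (a ⬝ᵥ x)^2 ≤ (a ⬝ᵥ a) * (x ⬝ᵥ x)
    have hcs : (a ⬝ᵥ x) ^ 2 ≤ (a ⬝ᵥ a) * (x ⬝ᵥ x) := by
      have := Finset.sum_mul_sq_le_sq_mul_sq Finset.univ a x
      simpa [dotProduct, sq] using this
    have h1 : (ε * (x ⬝ᵥ x)) ^ 2 ≤ (a ⬝ᵥ a) * (x ⬝ᵥ x) := by
      have h0 : 0 ≤ ε * (x ⬝ᵥ x) := mul_nonneg hε.le (dp_self_nonneg x)
      have := pow_le_pow_left₀ h0 hax 2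
      linarith
    have h2 : ε ^ 2 * (x ⬝ᵥ x) ≤ a ⬝ᵥ a := by
      have h3 : ε ^ 2 * (x ⬝ᵥ x) * (x ⬝ᵥ x) ≤ (a ⬝ᵥ a) * (x ⬝ᵥ x) := by nlinarith [h1]
      exact le_of_mul_le_mul_right h3 hxpos
    calc ε * gnorm x = Real.sqrt (ε ^ 2 * (x ⬝ᵥ x)) := by
          rw [gnorm_eq, Real.sqrt_mul (sq_nonneg ε), Real.sqrt_sq hε.le]
      _ ≤ Real.sqrt (a ⬝ᵥ a) := Real.sqrt_le_sqrt h2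
      _ = gnorm a := (gnorm_eq a).symm

lemma gnorm_pow_lower (G : SimpleGraph V) [DecidableRel G.Adj] {ε : ℝ} (hε : 0 < ε)
    (k : ℕ) (x : V → ℝ) : ε ^ k * gnorm x ≤ gnorm (((splineOp G ε) ^ k) *ᵥ x) := by
  induction k with
  | zero => simp [one_mulVec]
  | succ n ih =>
    have step := gnorm_lower G hε (((splineOp G ε) ^ n) *ᵥ x)
    rw [mulVec_mulVec, ← pow_succ'] at step
    calc ε ^ (n+1) * gnorm x = ε * (ε ^ n * gnorm x) := by ring
      _ ≤ ε * gnorm (((splineOp G ε) ^ n) *ᵥ x) :=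
          mul_le_mul_of_nonneg_left ih hε.le
      _ ≤ gnorm (((splineOp G ε) ^ (n+1)) *ᵥ x) := step

lemma abs_sum_le (h : V → ℝ) :
    |∑ v, h v| ≤ Real.sqrt (Fintype.card V) * gnorm h := by
  have hcs : (∑ v, h v) ^ 2 ≤ (Fintype.card V : ℝ) * ∑ v, h v ^ 2 := by
    have := Finset.sum_mul_sq_le_sq_mul_sq Finset.univ (fun _ : V => (1:ℝ)) h
    simpa [Finset.card_univ] using this
  have := Real.sqrt_le_sqrt hcs
  rw [Real.sqrt_sq_eq_abs, Real.sqrt_mul (Nat.cast_nonneg _)] at this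
  exact this

end Stmt14Aux

open Stmt14Aux in
/-- Optimality: with the spline cubature weights `θ_u = ∑_v L_{k,ε}^{U,u}(v)` coming from
the Lagrangian splines, for every `g ∈ Q(U,f,k,ε,K)` one has
`∑_{u∈U} g(u) θ_u = (a+b)/2`, where `[a,b]` is the interval of integrals of functions in
`Q(U,f,k,ε,K)`. -/
theorem stmt_14 {V : Type*} [Fintype V] [DecidableEq V]
    (G : SimpleGraph V) [DecidableRel G.Adj]
    (U : Finset V) (f : V → ℝ) (k : ℕ) (ε : ℝ) (hε : 0 < ε) (K : ℝ)
    (Lg : V → V → ℝ)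
    (hLgI : ∀ u ∈ U, ∀ w ∈ U, Lg u w = if w = u then 1 else 0)
    (hLgM : ∀ u ∈ U, ∀ Z : V → ℝ, (∀ w ∈ U, Z w = if w = u then 1 else 0) →
      gnorm (((splineOp G ε) ^ k).mulVec (Lg u)) ≤ gnorm (((splineOp G ε) ^ k).mulVec Z))
    (Y : V → ℝ)
    (hYI : ∀ u ∈ U, Y u = f u)
    (hYM : ∀ Z : V → ℝ, (∀ u ∈ U, Z u = f u) →
      gnorm (((splineOp G ε) ^ k).mulVec Y) ≤ gnorm (((splineOp G ε) ^ k).mulVec Z))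
    (hK : gnorm (((splineOp G ε) ^ k).mulVec Y) ≤ K)
    (g : V → ℝ)
    (hg : g ∈ {h : V → ℝ | (∀ u ∈ U, h u = f u) ∧
        gnorm (((splineOp G ε) ^ k).mulVec h) ≤ K}) :
    ∑ u ∈ U, g u * (∑ v, Lg u v) =
      (sInf ((fun h : V → ℝ => ∑ v, h v) ''
          {h : V → ℝ | (∀ u ∈ U, h u = f u) ∧
            gnorm (((splineOp G ε) ^ k).mulVec h) ≤ K}) +
       sSup ((fun h : V → ℝ => ∑ v, h v) ''
          {h : V → ℝ | (∀ u ∈ U, h u = f u) ∧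
            gnorm (((splineOp G ε) ^ k).mulVec h) ≤ K})) / 2 := by
  classical
  set A := (splineOp G ε) ^ k with hA
  set Q : Set (V → ℝ) := {h : V → ℝ | (∀ u ∈ U, h u = f u) ∧ gnorm (A.mulVec h) ≤ K} with hQ
  set S : (V → ℝ) → ℝ := fun h => ∑ v, h v with hS
  set T : Set ℝ := S '' Q with hT
  set W : V → ℝ := fun v => ∑ u ∈ U, f u * Lg u v with hW
  -- W interpolates f on U
  have hWU : ∀ w ∈ U, W w = f w := by
    intro w hw
    rw [hW]
    simp only
    rw [Finset.sum_congr rfl (fun u hu => by rw [hLgI u hu w hw])]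
    simp [hw]
  -- orthogonality of each Lagrangian spline against functions vanishing on U
  have hLgOrtho : ∀ u ∈ U, ∀ z : V → ℝ, (∀ w ∈ U, z w = 0) →
      (A *ᵥ Lg u) ⬝ᵥ (A *ᵥ z) = 0 := by
    intro u hu z hz
    apply ortho_of_min
    intro t
    have hZ : ∀ w ∈ U, (Lg u + t • z) w = if w = u then 1 else 0 := by
      intro w hw
      simp [hz w hw, hLgI u hu w hw]
    have := hLgM u hu (Lg u + t • z) hZ
    rw [gnorm_le_iff] at this
    rw [mulVec_add, mulVec_smul] at this
    exact this
  -- orthogonality of W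
  have hWOrtho : ∀ z : V → ℝ, (∀ w ∈ U, z w = 0) → (A *ᵥ W) ⬝ᵥ (A *ᵥ z) = 0 := by
    intro z hz
    have hWsum : W = ∑ u ∈ U, f u • Lg u := by
      funext v; simp [hW, Finset.sum_apply]
    rw [hWsum]
    have : A *ᵥ (∑ u ∈ U, f u • Lg u) = ∑ u ∈ U, f u • (A *ᵥ Lg u) := by
      rw [← A.mulVecLin_apply, map_sum]
      simp [Matrix.mulVecLin_apply]
    rw [this]
    have hsd : (∑ u ∈ U, f u • (A *ᵥ Lg u)) ⬝ᵥ (A *ᵥ z)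
        = ∑ u ∈ U, (f u • (A *ᵥ Lg u)) ⬝ᵥ (A *ᵥ z) := by
      simp only [dotProduct, Finset.sum_apply, Finset.sum_mul]
      exact Finset.sum_comm
    rw [hsd]
    apply Finset.sum_eq_zero
    intro u hu
    rw [smul_dotProduct, hLgOrtho u hu z hz, smul_zero]
  -- reflection map preserves Q and reflects S
  have hrefl : ∀ h ∈ Q, ((2:ℝ) • W - h) ∈ Q ∧ S ((2:ℝ) • W - h) = 2 * S W - S h := by
    intro h hh
    obtain ⟨hhU, hhK⟩ := hh
    constructor
    · constructor
      · intro u hu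
        simp [Pi.sub_apply, Pi.smul_apply, hWU u hu, hhU u hu]; ring
      · -- gnorm (A *ᵥ (2 • W - h)) = gnorm (A *ᵥ h)
        have hz : ∀ w ∈ U, (h - W) w = 0 := by
          intro w hw; simp [hhU w hw, hWU w hw]
        have ho := hWOrtho (h - W) hz
        have e0 : W + (h - W) = h := by
          funext v; simp only [Pi.add_apply, Pi.sub_apply]; ring
        have e0' : W - (h - W) = (2:ℝ) • W - h := by
          funext v
          simp only [Pi.sub_apply, Pi.smul_apply, smul_eq_mul]; ring
        have e1 : A *ᵥ h = A *ᵥ W + A *ᵥ (h - W) := by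
          rw [← mulVec_add, e0]
        have e2 : A *ᵥ ((2:ℝ) • W - h) = A *ᵥ W - A *ᵥ (h - W) := by
          rw [← mulVec_sub, e0']
        have hsq : (A *ᵥ ((2:ℝ) • W - h)) ⬝ᵥ (A *ᵥ ((2:ℝ) • W - h))
            = (A *ᵥ h) ⬝ᵥ (A *ᵥ h) := by
          rw [e1, e2]
          simp only [add_dotProduct, dotProduct_add, sub_dotProduct, dotProduct_sub,
            dotProduct_comm (A *ᵥ (h - W)) (A *ᵥ W)]
          rw [ho]; ring
        have : gnorm (A *ᵥ ((2:ℝ) • W - h)) = gnorm (A *ᵥ h) := by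
          rw [gnorm_eq, gnorm_eq, hsq]
        rw [this]; exact hhK
    · simp [hS, Finset.sum_sub_distrib, Finset.mul_sum, two_mul, Finset.sum_add_distrib]
  -- boundedness of T
  have hbound : ∀ t ∈ T, |t| ≤ Real.sqrt (Fintype.card V) * (K / ε ^ k) := by
    rintro t ⟨h, hh, rfl⟩
    have h1 : ε ^ k * gnorm h ≤ K := le_trans (gnorm_pow_lower G hε k h) hh.2
    have hek : (0:ℝ) < ε ^ k := pow_pos hε k
    have h2 : gnorm h ≤ K / ε ^ k := (le_div_iff₀' hek).mpr h1
    calc |S h| ≤ Real.sqrt (Fintype.card V) * gnorm h := abs_sum_le h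
      _ ≤ Real.sqrt (Fintype.card V) * (K / ε ^ k) :=
          mul_le_mul_of_nonneg_left h2 (Real.sqrt_nonneg _)
  have hTne : T.Nonempty := ⟨S g, g, hg, rfl⟩
  have hTbdd : BddAbove T := ⟨Real.sqrt (Fintype.card V) * (K / ε ^ k),
    fun t ht => le_trans (le_abs_self t) (hbound t ht)⟩
  have hTbddB : BddBelow T := ⟨-(Real.sqrt (Fintype.card V) * (K / ε ^ k)),
    fun t ht => neg_le_of_neg_le (le_trans (neg_le_abs t) (hbound t ht))⟩
  -- the reflection on T
  have hTrefl : ∀ t ∈ T, 2 * S W - t ∈ T := by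
    rintro t ⟨h, hh, rfl⟩
    obtain ⟨hmem, hval⟩ := hrefl h hh
    exact ⟨(2:ℝ) • W - h, hmem, hval⟩
  -- sInf T + sSup T = 2 * S W
  have hkey : sInf T + sSup T = 2 * S W := by
    apply le_antisymm
    · have h1 : ∀ t ∈ T, sInf T ≤ 2 * S W - t := fun t ht => csInf_le hTbddB (hTrefl t ht)
      have h2 : sSup T ≤ 2 * S W - sInf T := by
        apply csSup_le hTne
        intro t ht; linarith [h1 t ht]
      linarith
    · have h1 : ∀ t ∈ T, 2 * S W - t ≤ sSup T := fun t ht => le_csSup hTbdd (hTrefl t ht)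
      have h2 : 2 * S W - sSup T ≤ sInf T := by
        apply le_csInf hTne
        intro t ht; linarith [h1 t ht]
      linarith
  -- LHS equals S W
  have hLHS : ∑ u ∈ U, g u * (∑ v, Lg u v) = S W := by
    have hstep : ∀ u ∈ U, g u * (∑ v, Lg u v) = ∑ v, f u * Lg u v := by
      intro u hu
      rw [hg.1 u hu, Finset.mul_sum]
    rw [Finset.sum_congr rfl hstep, Finset.sum_comm]
  rw [hLHS]
  linarith [hkey]
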